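/- The subgroup {(a, b√3; c√3, d) ∈ G : c ≡ 0 (mod 3)} of SL(2,ℝ) is generated by the four matrices −I, A₁ = (1, √3; 0, 1), A₂ = (−5, 4√3; −3√3, 7) and A₃ = (−2, √3; −3√3, 4). -/

import Mathlib

/-- The subgroup of `SL(2, ℝ)` of matrices of the form `(a, b√3; c√3, d)` with
`a, b, c, d ∈ ℤ`, `ad − 3bc = 1` and `m ∣ c`. -/
def sqrt3Group (m : ℤ) : Subgroup (Matrix.SpecialLinearGroup (Fin 2) ℝ) where
  carrier := {A | ∃ a b c d : ℤ, (A : Matrix (Fin 2) (Fin 2) ℝ) =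
      !![(a:ℝ), (b:ℝ) * Real.sqrt 3; (c:ℝ) * Real.sqrt 3, (d:ℝ)] ∧
      a * d - 3 * b * c = 1 ∧ m ∣ c}
  one_mem' := by
    refine ⟨1, 0, 0, 1, ?_, by ring, dvd_zero m⟩
    rw [Matrix.SpecialLinearGroup.coe_one, Matrix.one_fin_two]
    norm_num
  mul_mem' := by
    rintro A B ⟨a₁, b₁, c₁, d₁, hA, hdA, hcA⟩ ⟨a₂, b₂, c₂, d₂, hB, hdB, hcB⟩
    have h3 : Real.sqrt 3 * Real.sqrt 3 = 3 := Real.mul_self_sqrt (by norm_num)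
    refine ⟨a₁ * a₂ + 3 * b₁ * c₂, a₁ * b₂ + b₁ * d₂, c₁ * a₂ + d₁ * c₂,
      3 * c₁ * b₂ + d₁ * d₂, ?_, ?_, ?_⟩
    · rw [Matrix.SpecialLinearGroup.coe_mul, hA, hB, Matrix.mul_fin_two]
      ext i j
      fin_cases i <;> fin_cases j <;> push_cast <;> simp
      · linear_combination ((b₁ : ℝ) * (c₂ : ℝ)) * h3
      · ring
      · ring
      · linear_combination ((c₁ : ℝ) * (b₂ : ℝ)) * h3
    · linear_combination (a₂ * d₂ - 3 * b₂ * c₂) * hdA + hdB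
    · exact dvd_add (hcA.mul_right _) (hcB.mul_left _)
  inv_mem' := by
    rintro A ⟨a, b, c, d, hA, hdA, hcA⟩
    refine ⟨d, -b, -c, a, ?_, by linear_combination hdA, dvd_neg.mpr hcA⟩
    rw [Matrix.SpecialLinearGroup.coe_inv, hA, Matrix.adjugate_fin_two]
    ext i j
    fin_cases i <;> fin_cases j <;> push_cast <;> simp


open Matrix.SpecialLinearGroup

noncomputable def matM (a b c d : ℤ) : Matrix (Fin 2) (Fin 2) ℝ :=
  !![(a:ℝ), (b:ℝ) * Real.sqrt 3; (c:ℝ) * Real.sqrt 3, (d:ℝ)]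

lemma matM_congr {a b c d a' b' c' d' : ℤ} (h1 : a = a') (h2 : b = b') (h3 : c = c')
    (h4 : d = d') : matM a b c d = matM a' b' c' d' := by rw [h1, h2, h3, h4]

lemma matM_mul (a b c d a' b' c' d' : ℤ) :
    matM a b c d * matM a' b' c' d' =
      matM (a*a'+3*b*c') (a*b'+b*d') (c*a'+d*c') (3*c*b'+d*d') := by
  have h3 : Real.sqrt 3 * Real.sqrt 3 = 3 := Real.mul_self_sqrt (by norm_num)
  rw [matM, matM, matM, Matrix.mul_fin_two]
  ext i j
  fin_cases i <;> fin_cases j <;> push_cast <;> simp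
  · linear_combination ((b : ℝ) * (c' : ℝ)) * h3
  · ring
  · ring
  · linear_combination ((c : ℝ) * (b' : ℝ)) * h3

lemma det_mul_quad {p q r s a b c d : ℤ} (h1 : p*s-3*q*r = 1) (h2 : a*d-3*b*c = 1) :
    (p*a+3*q*c)*(3*r*b+s*d) - 3*(p*b+q*d)*(r*a+s*c) = 1 := by
  linear_combination (a*d-3*b*c)*h1 + h2

lemma coe_neg_one' : ((-1 : Matrix.SpecialLinearGroup (Fin 2) ℝ) : Matrix (Fin 2) (Fin 2) ℝ)
    = matM (-1) 0 0 (-1) := by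
  ext i j
  fin_cases i <;> fin_cases j <;>
    simp [matM, Matrix.SpecialLinearGroup.coe_one, Matrix.one_fin_two]

lemma coe_inv_matM {a b c d : ℤ} (A : Matrix.SpecialLinearGroup (Fin 2) ℝ)
    (h : (A : Matrix (Fin 2) (Fin 2) ℝ) = matM a b c d) :
    ((A⁻¹ : Matrix.SpecialLinearGroup (Fin 2) ℝ) : Matrix (Fin 2) (Fin 2) ℝ)
      = matM d (-b) (-c) a := by
  rw [Matrix.SpecialLinearGroup.coe_inv, h, matM, Matrix.adjugate_fin_two, matM]
  ext i j
  fin_cases i <;> fin_cases j <;> push_cast <;> simp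

lemma coe_zpow_T (A : Matrix.SpecialLinearGroup (Fin 2) ℝ)
    (h : (A : Matrix (Fin 2) (Fin 2) ℝ) = matM 1 1 0 1) (k : ℤ) :
    ((A ^ k : Matrix.SpecialLinearGroup (Fin 2) ℝ) : Matrix (Fin 2) (Fin 2) ℝ)
      = matM 1 k 0 1 := by
  induction k using Int.induction_on with
  | zero =>
    ext i j
    fin_cases i <;> fin_cases j <;>
      simp [matM, Matrix.SpecialLinearGroup.coe_one, Matrix.one_fin_two]
  | succ n ih =>
    rw [zpow_add_one, Matrix.SpecialLinearGroup.coe_mul, ih, h, matM_mul]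
    exact matM_congr (by ring) (by ring) (by ring) (by ring)
  | pred n ih =>
    rw [zpow_sub_one, Matrix.SpecialLinearGroup.coe_mul, ih, coe_inv_matM A h, matM_mul]
    exact matM_congr (by ring) (by ring) (by ring) (by ring)

abbrev SL2 := Matrix.SpecialLinearGroup (Fin 2) ℝ

lemma descend_pos (A₁ A₂ A₃ : SL2)
    (h₁ : (A₁ : Matrix (Fin 2) (Fin 2) ℝ) = matM 1 1 0 1)
    (h₂ : (A₂ : Matrix (Fin 2) (Fin 2) ℝ) = matM (-5) 4 (-3) 7)
    (h₃ : (A₃ : Matrix (Fin 2) (Fin 2) ℝ) = matM (-2) 1 (-3) 4)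
    (a b c d : ℤ) (A : SL2) (hA : (A : Matrix (Fin 2) (Fin 2) ℝ) = matM a b c d)
    (hdet : a*d-3*b*c = 1) (hdvd : 3 ∣ c) (hc : 0 < c) :
    ∃ W ∈ Subgroup.closure {(-1 : SL2), A₁, A₂, A₃}, ∃ a' b' c' d' : ℤ,
      ((W * A : SL2) : Matrix (Fin 2) (Fin 2) ℝ) = matM a' b' c' d' ∧
      a'*d'-3*b'*c' = 1 ∧ 3 ∣ c' ∧ c'.natAbs < c.natAbs := by
  obtain ⟨c₀, hc₀⟩ := hdvd
  have m1 : A₁ ∈ Subgroup.closure {(-1 : SL2), A₁, A₂, A₃} :=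
    Subgroup.subset_closure (by simp)
  have m2 : A₂ ∈ Subgroup.closure {(-1 : SL2), A₁, A₂, A₃} :=
    Subgroup.subset_closure (by simp)
  have m3 : A₃ ∈ Subgroup.closure {(-1 : SL2), A₁, A₂, A₃} :=
    Subgroup.subset_closure (by simp)
  set x := a % (3*c) with hxdef
  obtain ⟨k, hk⟩ : ∃ k : ℤ, a + 3*k*c = x :=
    ⟨-(a/(3*c)), by rw [hxdef]; linear_combination - (Int.mul_ediv_add_emod a (3*c))⟩
  have hx0 : 0 ≤ x := Int.emod_nonneg a (by omega)
  have hx1 : x < 3*c := Int.emod_lt_of_pos a (by omega)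
  have hne : ∀ t : ℤ, x ≠ t*c := by
    intro t ht
    have hd1 : c ∣ 1 := ⟨t*d - 3*k*d - 3*b, by
      linear_combination (-1) * hdet + d * hk + d * ht⟩
    have := Int.le_of_dvd one_pos hd1
    omega
  have hne0 := hne 0
  have hnec := hne 1
  have hne2c := hne 2
  have hpow := coe_zpow_T A₁ h₁
  have hi2 := coe_inv_matM A₂ h₂
  have hi3 := coe_inv_matM A₃ h₃
  have hL : ((A₃*A₂*A₁ : SL2) : Matrix (Fin 2) (Fin 2) ℝ) = matM 1 0 3 1 := by
    rw [Matrix.SpecialLinearGroup.coe_mul, Matrix.SpecialLinearGroup.coe_mul,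
      h₃, h₂, h₁, matM_mul, matM_mul]
    exact matM_congr (by ring) (by ring) (by ring) (by ring)
  have hLinv : (((A₃*A₂*A₁)⁻¹ : SL2) : Matrix (Fin 2) (Fin 2) ℝ) = matM 1 0 (-3) 1 := by
    rw [coe_inv_matM _ hL]
    exact matM_congr (by ring) (by ring) (by ring) (by ring)
  rcases lt_or_ge (3*x) (2*c) with hcase | hcase
  · -- W = (A₃A₂A₁)⁻¹ * A₁^k, quad (1, k, -3, -9k+1)
    refine ⟨(A₃*A₂*A₁)⁻¹ * A₁^k, mul_mem (inv_mem (mul_mem (mul_mem m3 m2) m1)) (zpow_mem m1 k),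
      1*a+3*k*c, 1*b+k*d, (-3)*a+(-9*k+1)*c, 3*(-3)*b+(-9*k+1)*d,
      ?_, det_mul_quad (by ring) hdet, ⟨-a + (-9*k+1)*c₀, by rw [hc₀]; ring⟩, ?_⟩
    · rw [Matrix.SpecialLinearGroup.coe_mul, Matrix.SpecialLinearGroup.coe_mul,
        hLinv, hpow k, hA, matM_mul, matM_mul]
      exact matM_congr (by ring) (by ring) (by ring) (by ring)
    · rw [show (-3)*a + (-9*k+1)*c = -(3*x) + c by linear_combination (-3) * hk]
      omega
  · rcases lt_or_ge (3*x) (3*c) with hcase2 | hcase2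
    · -- W = A₃⁻¹ * A₁^k, quad (4, 4k-1, 3, 9k-2)
      refine ⟨A₃⁻¹ * A₁^k, mul_mem (inv_mem m3) (zpow_mem m1 k),
        4*a+3*(4*k-1)*c, 4*b+(4*k-1)*d, 3*a+(9*k-2)*c, 3*3*b+(9*k-2)*d,
        ?_, det_mul_quad (by ring) hdet, ⟨a + (9*k-2)*c₀, by rw [hc₀]; ring⟩, ?_⟩
      · rw [Matrix.SpecialLinearGroup.coe_mul, Matrix.SpecialLinearGroup.coe_mul,
          hi3, hpow k, hA, matM_mul, matM_mul]
        exact matM_congr (by ring) (by ring) (by ring) (by ring)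
      · rw [show 3*a + (9*k-2)*c = 3*x - 2*c by linear_combination 3 * hk]
        omega
    · rcases lt_or_ge (3*x) (5*c) with hcase3 | hcase3
      · -- W = A₃ * A₁^k, quad (-2, -2k+1, -3, -9k+4)
        refine ⟨A₃ * A₁^k, mul_mem m3 (zpow_mem m1 k),
          (-2)*a+3*(-2*k+1)*c, (-2)*b+(-2*k+1)*d, (-3)*a+(-9*k+4)*c, 3*(-3)*b+(-9*k+4)*d,
          ?_, det_mul_quad (by ring) hdet, ⟨-a + (-9*k+4)*c₀, by rw [hc₀]; ring⟩, ?_⟩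
        · rw [Matrix.SpecialLinearGroup.coe_mul, Matrix.SpecialLinearGroup.coe_mul,
            h₃, hpow k, hA, matM_mul, matM_mul]
          exact matM_congr (by ring) (by ring) (by ring) (by ring)
        · rw [show (-3)*a + (-9*k+4)*c = -(3*x) + 4*c by linear_combination (-3) * hk]
          omega
      · rcases lt_or_ge (3*x) (6*c) with hcase4 | hcase4
        · -- W = A₂⁻¹ * A₁^k, quad (7, 7k-4, 3, 9k-5)
          refine ⟨A₂⁻¹ * A₁^k, mul_mem (inv_mem m2) (zpow_mem m1 k),
            7*a+3*(7*k-4)*c, 7*b+(7*k-4)*d, 3*a+(9*k-5)*c, 3*3*b+(9*k-5)*d,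
            ?_, det_mul_quad (by ring) hdet, ⟨a + (9*k-5)*c₀, by rw [hc₀]; ring⟩, ?_⟩
          · rw [Matrix.SpecialLinearGroup.coe_mul, Matrix.SpecialLinearGroup.coe_mul,
              hi2, hpow k, hA, matM_mul, matM_mul]
            exact matM_congr (by ring) (by ring) (by ring) (by ring)
          · rw [show 3*a + (9*k-5)*c = 3*x - 5*c by linear_combination 3 * hk]
            omega
        · rcases lt_or_ge (3*x) (8*c) with hcase5 | hcase5
          · -- W = A₂ * A₁^k, quad (-5, -5k+4, -3, -9k+7)
            refine ⟨A₂ * A₁^k, mul_mem m2 (zpow_mem m1 k),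
              (-5)*a+3*(-5*k+4)*c, (-5)*b+(-5*k+4)*d, (-3)*a+(-9*k+7)*c, 3*(-3)*b+(-9*k+7)*d,
              ?_, det_mul_quad (by ring) hdet, ⟨-a + (-9*k+7)*c₀, by rw [hc₀]; ring⟩, ?_⟩
            · rw [Matrix.SpecialLinearGroup.coe_mul, Matrix.SpecialLinearGroup.coe_mul,
                h₂, hpow k, hA, matM_mul, matM_mul]
              exact matM_congr (by ring) (by ring) (by ring) (by ring)
            · rw [show (-3)*a + (-9*k+7)*c = -(3*x) + 7*c by linear_combination (-3) * hk]
              omega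
          · -- W = (A₃A₂A₁) * A₁^(k-1), quad (1, k-1, 3, 9k-8)
            refine ⟨(A₃*A₂*A₁) * A₁^(k-1),
              mul_mem (mul_mem (mul_mem m3 m2) m1) (zpow_mem m1 (k-1)),
              1*a+3*(k-1)*c, 1*b+(k-1)*d, 3*a+(9*k-8)*c, 3*3*b+(9*k-8)*d,
              ?_, det_mul_quad (by ring) hdet, ⟨a + (9*k-8)*c₀, by rw [hc₀]; ring⟩, ?_⟩
            · rw [Matrix.SpecialLinearGroup.coe_mul, Matrix.SpecialLinearGroup.coe_mul,
                hL, hpow (k-1), hA, matM_mul, matM_mul]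
              exact matM_congr (by ring) (by ring) (by ring) (by ring)
            · rw [show 3*a + (9*k-8)*c = 3*x - 8*c by linear_combination 3 * hk]
              omega

lemma mem_closure_aux (A₁ A₂ A₃ : SL2)
    (h₁ : (A₁ : Matrix (Fin 2) (Fin 2) ℝ) = matM 1 1 0 1)
    (h₂ : (A₂ : Matrix (Fin 2) (Fin 2) ℝ) = matM (-5) 4 (-3) 7)
    (h₃ : (A₃ : Matrix (Fin 2) (Fin 2) ℝ) = matM (-2) 1 (-3) 4)
    (n : ℕ) :
    ∀ a b c d : ℤ, ∀ A : SL2, (A : Matrix (Fin 2) (Fin 2) ℝ) = matM a b c d →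
      a*d-3*b*c = 1 → 3 ∣ c → c.natAbs ≤ n →
      A ∈ Subgroup.closure {(-1 : SL2), A₁, A₂, A₃} := by
  induction n using Nat.strong_induction_on with
  | _ n IH =>
  intro a b c d A hA hdet hdvd hle
  have m1 : A₁ ∈ Subgroup.closure {(-1 : SL2), A₁, A₂, A₃} :=
    Subgroup.subset_closure (by simp)
  have mneg : (-1 : SL2) ∈ Subgroup.closure {(-1 : SL2), A₁, A₂, A₃} :=
    Subgroup.subset_closure (by simp)
  rcases eq_or_ne c 0 with rfl | hc0
  · -- base case : A = ± A₁ ^ (± b)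
    have had : a * d = 1 := by linear_combination hdet
    rcases Int.mul_eq_one_iff_eq_one_or_neg_one.mp had with ⟨rfl, rfl⟩ | ⟨rfl, rfl⟩
    · have : A = A₁ ^ b := by
        apply Subtype.ext
        rw [hA, coe_zpow_T A₁ h₁ b]
      rw [this]; exact zpow_mem m1 b
    · have : A = (-1) * A₁ ^ (-b) := by
        apply Subtype.ext
        rw [hA, Matrix.SpecialLinearGroup.coe_mul, coe_neg_one', coe_zpow_T A₁ h₁ (-b), matM_mul]
        exact matM_congr (by ring) (by ring) (by ring) (by ring)
      rw [this]; exact mul_mem mneg (zpow_mem m1 (-b))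
  · rcases lt_or_gt_of_ne hc0 with hneg | hpos
    · -- c < 0 : work with (-1) * A
      have hA' : (((-1 : SL2) * A : SL2) : Matrix (Fin 2) (Fin 2) ℝ)
          = matM (-a) (-b) (-c) (-d) := by
        rw [Matrix.SpecialLinearGroup.coe_mul, coe_neg_one', hA, matM_mul]
        exact matM_congr (by ring) (by ring) (by ring) (by ring)
      obtain ⟨W, hW, a', b', c', d', hcoe, hdet', hdvd', hlt⟩ :=
        descend_pos A₁ A₂ A₃ h₁ h₂ h₃ (-a) (-b) (-c) (-d) ((-1) * A) hA'
          (by linear_combination hdet) (by omega) (by omega)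
      have hmem : W * ((-1) * A) ∈ Subgroup.closure {(-1 : SL2), A₁, A₂, A₃} :=
        IH c'.natAbs (by omega) a' b' c' d' _ hcoe hdet' hdvd' le_rfl
      have : A = (W * (-1))⁻¹ * (W * ((-1) * A)) := by group
      rw [this]
      exact mul_mem (inv_mem (mul_mem hW mneg)) hmem
    · obtain ⟨W, hW, a', b', c', d', hcoe, hdet', hdvd', hlt⟩ :=
        descend_pos A₁ A₂ A₃ h₁ h₂ h₃ a b c d A hA hdet hdvd hpos
      have hmem : W * A ∈ Subgroup.closure {(-1 : SL2), A₁, A₂, A₃} :=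
        IH c'.natAbs (by omega) a' b' c' d' _ hcoe hdet' hdvd' le_rfl
      have : A = W⁻¹ * (W * A) := by group
      rw [this]
      exact mul_mem (inv_mem hW) hmem


/-- The subgroup `{(a, b√3; c√3, d) ∈ G : 3 ∣ c}` of `SL(2, ℝ)` is generated by the four
matrices `−I`, `A₁ = (1, √3; 0, 1)`, `A₂ = (−5, 4√3; −3√3, 7)` and `A₃ = (−2, √3; −3√3, 4)`. -/
theorem closure_eq_sqrt3Group_three
    (A₁ A₂ A₃ : Matrix.SpecialLinearGroup (Fin 2) ℝ)
    (h₁ : (A₁ : Matrix (Fin 2) (Fin 2) ℝ) = !![1, Real.sqrt 3; 0, 1])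
    (h₂ : (A₂ : Matrix (Fin 2) (Fin 2) ℝ) = !![-5, 4 * Real.sqrt 3; -3 * Real.sqrt 3, 7])
    (h₃ : (A₃ : Matrix (Fin 2) (Fin 2) ℝ) = !![-2, Real.sqrt 3; -3 * Real.sqrt 3, 4]) :
    Subgroup.closure {(-1 : Matrix.SpecialLinearGroup (Fin 2) ℝ), A₁, A₂, A₃} =
      sqrt3Group 3 := by
  have h₁' : (A₁ : Matrix (Fin 2) (Fin 2) ℝ) = matM 1 1 0 1 := by
    rw [h₁]; ext i j; fin_cases i <;> fin_cases j <;> norm_num [matM]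
  have h₂' : (A₂ : Matrix (Fin 2) (Fin 2) ℝ) = matM (-5) 4 (-3) 7 := by
    rw [h₂]; ext i j; fin_cases i <;> fin_cases j <;> norm_num [matM]
  have h₃' : (A₃ : Matrix (Fin 2) (Fin 2) ℝ) = matM (-2) 1 (-3) 4 := by
    rw [h₃]; ext i j; fin_cases i <;> fin_cases j <;> norm_num [matM]
  apply le_antisymm
  · rw [Subgroup.closure_le]
    intro x hx
    simp only [Set.mem_insert_iff, Set.mem_singleton_iff] at hx
    rcases hx with rfl | rfl | rfl | rfl
    · exact ⟨-1, 0, 0, -1, coe_neg_one', by norm_num, ⟨0, by ring⟩⟩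
    · exact ⟨1, 1, 0, 1, h₁', by norm_num, ⟨0, by ring⟩⟩
    · exact ⟨-5, 4, -3, 7, h₂', by norm_num, ⟨-1, by ring⟩⟩
    · exact ⟨-2, 1, -3, 4, h₃', by norm_num, ⟨-1, by ring⟩⟩
  · intro A hA
    obtain ⟨a, b, c, d, hm, hdet, hdvd⟩ := hA
    exact mem_closure_aux A₁ A₂ A₃ h₁' h₂' h₃' c.natAbs a b c d A hm hdet hdvd le_rfl
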